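/- Let j be a gauge function as above on ℝ^{2n}, let φ : ℝ → ℝ be a C^∞ function with φ(t) ≥ 0 for t ≥ 0, φ(0) = φ'(0) = 0, φ''(0) = 1, φ'(t) > 0 for t > 0, t ↦ φ'(t)/t strictly decreasing on (0,∞) and φ'(t)/t → 1 as t → 0⁺; let a, T > 0 and define H_a(x) = a·φ(j(x)) (with H_a(0) = 0). Then: (i) if (τ, y) is a closed characteristic (ẏ = J·∇j(y), j(y(t)) = 1, y τ-periodic) and ρ > 0 satisfies a·φ'(ρ) = ρ·τ/T, then x(t) := ρ·y(τ·t/T) is a T-periodic solution of ẋ(t) = J·∇H_a(x(t)); (ii) conversely, every nonconstant T-periodic solution x of ẋ = J·∇H_a(x) arises this way: there exist τ ∈ (0, a·T), ρ > 0 with a·φ'(ρ) = ρ·τ/T, and a closed characteristic (τ, y) such that x(t) = ρ·y(τ·t/T) for all t. -/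

import Mathlib

/-- The standard symplectic matrix `J = [[0, -I_n],[I_n, 0]]` acting on `ℝ^{2n}`. -/
noncomputable def Jmap (n : ℕ) (x : EuclideanSpace ℝ (Fin (2 * n))) :
    EuclideanSpace ℝ (Fin (2 * n)) :=
  WithLp.toLp 2 fun (i : Fin (2 * n)) => if h : (i : ℕ) < n then -x ⟨(i : ℕ) + n, by omega⟩
           else x ⟨(i : ℕ) - n, by have := i.isLt; omega⟩

/-- `j` is the gauge function of a `C³` compact hypersurface in `ℝ^{2n}` strictly star-shaped
with respect to the origin: positively homogeneous of degree 1, positive away from `0`,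
vanishing at `0`, and `C³` on `ℝ^{2n} ∖ {0}`. -/
def IsGauge (n : ℕ) (j : EuclideanSpace ℝ (Fin (2 * n)) → ℝ) : Prop :=
  (∀ t : ℝ, 0 < t → ∀ x, j (t • x) = t * j x) ∧
  (∀ x, x ≠ 0 → 0 < j x) ∧
  j 0 = 0 ∧
  ContDiffOn ℝ 3 j {(0 : EuclideanSpace ℝ (Fin (2 * n)))}ᶜ

/-- `(τ, y)` is a closed characteristic on `Σ = j⁻¹(1)`:
`τ > 0`, `ẏ(t) = J·∇j(y(t))`, `j(y(t)) = 1` and `y(t + τ) = y(t)` for all `t`. -/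
def IsClosedCharacteristic (n : ℕ) (j : EuclideanSpace ℝ (Fin (2 * n)) → ℝ)
    (τ : ℝ) (y : ℝ → EuclideanSpace ℝ (Fin (2 * n))) : Prop :=
  0 < τ ∧
  (∀ t : ℝ, HasDerivAt y (Jmap n (gradient j (y t))) t) ∧
  (∀ t : ℝ, j (y t) = 1) ∧
  (∀ t : ℝ, y (t + τ) = y t)


section helper
open Set Filter Topology InnerProductSpace

variable {n : ℕ} {j : EuclideanSpace ℝ (Fin (2 * n)) → ℝ}

lemma gauge_diffAt (hj : IsGauge n j) {x : EuclideanSpace ℝ (Fin (2 * n))} (hx : x ≠ 0) :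
    DifferentiableAt ℝ j x :=
  (hj.2.2.2.contDiffAt (isOpen_compl_singleton.mem_nhds hx)).differentiableAt
    (by norm_num)

lemma gauge_fderiv_smul (hj : IsGauge n j) {t : ℝ} (ht : 0 < t)
    {x : EuclideanSpace ℝ (Fin (2 * n))} (hx : x ≠ 0) :
    fderiv ℝ j (t • x) = fderiv ℝ j x := by
  have htx : t • x ≠ 0 := smul_ne_zero (ne_of_gt ht) hx
  have h1 : HasFDerivAt (j ∘ fun z : EuclideanSpace ℝ (Fin (2 * n)) => t • z)
      ((fderiv ℝ j (t • x)).comp (t • (ContinuousLinearMap.id ℝ _))) x :=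
    (gauge_diffAt hj htx).hasFDerivAt.comp x ((hasFDerivAt_id x).const_smul t)
  have heq : (j ∘ fun z : EuclideanSpace ℝ (Fin (2 * n)) => t • z)
      = fun z => t * j z := funext fun z => hj.1 t ht z
  rw [heq] at h1
  have h2 : HasFDerivAt (fun z => t * j z) (t • fderiv ℝ j x) x :=
    (gauge_diffAt hj hx).hasFDerivAt.const_mul t
  have h3 := h1.unique h2
  ext v
  have h4 := congrArg (fun L : _ →L[ℝ] ℝ => L v) h3
  simp only [ContinuousLinearMap.comp_apply, ContinuousLinearMap.smul_apply,
    ContinuousLinearMap.id_apply, smul_eq_mul, map_smul] at h4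
  exact mul_left_cancel₀ (ne_of_gt ht) h4

lemma gauge_gradient_smul (hj : IsGauge n j) {t : ℝ} (ht : 0 < t)
    {x : EuclideanSpace ℝ (Fin (2 * n))} (hx : x ≠ 0) :
    gradient j (t • x) = gradient j x := by
  unfold gradient
  rw [gauge_fderiv_smul hj ht hx]

lemma gauge_hasGradientAt_comp (hj : IsGauge n j) {φ : ℝ → ℝ}
    (hφsmooth : ContDiff ℝ (⊤ : ℕ∞) φ) (a : ℝ)
    {x : EuclideanSpace ℝ (Fin (2 * n))} (hx : x ≠ 0) :
    HasGradientAt (fun z => a * φ (j z)) ((a * deriv φ (j x)) • gradient j x) x := by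
  have hgj : HasGradientAt j (gradient j x) x := (gauge_diffAt hj hx).hasGradientAt
  have hφ' : HasDerivAt φ (deriv φ (j x)) (j x) :=
    ((hφsmooth.differentiable (by simp)) (j x)).hasDerivAt
  rw [hasGradientAt_iff_hasFDerivAt] at hgj ⊢
  have h2 := (hφ'.comp_hasFDerivAt x hgj).const_mul a
  have h3 : (toDual ℝ (EuclideanSpace ℝ (Fin (2 * n))))
        ((a * deriv φ (j x)) • gradient j x)
      = a • (deriv φ (j x) • (toDual ℝ (EuclideanSpace ℝ (Fin (2 * n)))) (gradient j x)) := by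
    rw [map_smul, smul_smul]
  rw [h3]
  exact h2


lemma gauge_bound (hn : 0 < n) (hj : IsGauge n j) :
    ∃ C : ℝ, 0 < C ∧ ∀ z, j z ≤ C * ‖z‖ := by
  have hu : (EuclideanSpace.single (⟨0, by omega⟩ : Fin (2*n)) (1:ℝ)) ∈
      Metric.sphere (0 : EuclideanSpace ℝ (Fin (2*n))) 1 := by
    simp [EuclideanSpace.norm_single]
  have hconts : ContinuousOn j (Metric.sphere (0 : EuclideanSpace ℝ (Fin (2*n))) 1) := by
    apply (hj.2.2.2.continuousOn).mono
    intro z hz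
    rw [Metric.mem_sphere, dist_zero_right] at hz
    simp only [Set.mem_compl_iff, Set.mem_singleton_iff]
    intro h0
    rw [h0] at hz; simp at hz
  obtain ⟨w, hw, hmax⟩ := (isCompact_sphere (0 : EuclideanSpace ℝ (Fin (2*n))) 1).exists_isMaxOn
    ⟨_, hu⟩ hconts
  refine ⟨max (j w) 1, lt_of_lt_of_le one_pos (le_max_right _ _), fun z => ?_⟩
  rcases eq_or_ne z 0 with rfl | hz
  · simp [hj.2.2.1]
  · have hnz : (0:ℝ) < ‖z‖ := norm_pos_iff.mpr hz
    have hus : ‖z‖⁻¹ • z ∈ Metric.sphere (0 : EuclideanSpace ℝ (Fin (2*n))) 1 := by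
      rw [Metric.mem_sphere, dist_zero_right, norm_smul, norm_inv, norm_norm]
      exact inv_mul_cancel₀ (ne_of_gt hnz)
    have hzz : j z = ‖z‖ * j (‖z‖⁻¹ • z) := by
      conv_lhs => rw [← smul_inv_smul₀ (ne_of_gt hnz) z]
      rw [hj.1 _ hnz]
    rw [hzz, mul_comm]
    apply mul_le_mul_of_nonneg_right _ hnz.le
    exact le_trans (hmax hus) (le_max_left _ _)

lemma gauge_hasGradientAt_zero (hn : 0 < n) (hj : IsGauge n j) {φ : ℝ → ℝ}
    (hφsmooth : ContDiff ℝ (⊤ : ℕ∞) φ) (hφ0 : φ 0 = 0) (hφ'0 : deriv φ 0 = 0)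
    {a : ℝ} (ha : 0 < a) :
    HasGradientAt (fun z => a * φ (j z)) 0 (0 : EuclideanSpace ℝ (Fin (2 * n))) := by
  obtain ⟨C, hC, hbound⟩ := gauge_bound hn hj
  rw [hasGradientAt_iff_hasFDerivAt, map_zero, hasFDerivAt_iff_isLittleO_nhds_zero]
  simp only [zero_add, hj.2.2.1, hφ0, mul_zero, ContinuousLinearMap.zero_apply, sub_zero]
  rw [Asymptotics.isLittleO_iff]
  intro c hc
  have hslope : Filter.Tendsto (fun s => φ s / s) (nhdsWithin (0:ℝ) {(0:ℝ)}ᶜ) (nhds 0) := by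
    have h1 := hasDerivAt_iff_tendsto_slope.mp
      ((hφsmooth.differentiable (by simp)) 0).hasDerivAt
    rw [hφ'0] at h1
    have h2 : slope φ 0 = fun s => φ s / s := by
      funext s; rw [slope_def_field]; simp [hφ0]
    rwa [h2] at h1
  set ε := c / (a * C) with hε
  have hεpos : 0 < ε := div_pos hc (mul_pos ha hC)
  have hev : ∀ᶠ s in nhdsWithin (0:ℝ) {(0:ℝ)}ᶜ, |φ s| / |s| < ε := by
    have := Metric.tendsto_nhds.mp hslope ε hεpos
    simpa [Real.dist_eq] using this
  rw [eventually_nhdsWithin_iff, Metric.eventually_nhds_iff] at hev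
  obtain ⟨δ, hδ, hev⟩ := hev
  have hball : Metric.ball (0 : EuclideanSpace ℝ (Fin (2*n))) (δ / C) ∈
      nhds (0 : EuclideanSpace ℝ (Fin (2*n))) :=
    Metric.ball_mem_nhds _ (div_pos hδ hC)
  filter_upwards [hball] with z hz
  rw [Metric.mem_ball, dist_zero_right] at hz
  rcases eq_or_ne z 0 with rfl | hz0
  · simp [hφ0, hj.2.2.1]
  · have hjz : 0 < j z := hj.2.1 z hz0
    have hjzδ : j z < δ := by
      calc j z ≤ C * ‖z‖ := hbound z
        _ < C * (δ / C) := by exact mul_lt_mul_of_pos_left hz hC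
        _ = δ := by field_simp
    have h3 : |φ (j z)| / |j z| < ε := by
      apply hev (show dist (j z) 0 < δ by
        rw [Real.dist_eq, sub_zero, abs_of_pos hjz]; exact hjzδ)
      simp only [Set.mem_compl_iff, Set.mem_singleton_iff]
      exact ne_of_gt hjz
    have h4 : |φ (j z)| ≤ ε * j z := by
      rw [abs_of_pos hjz] at h3
      calc |φ (j z)| = |φ (j z)| / j z * j z := by field_simp
        _ ≤ ε * j z := mul_le_mul_of_nonneg_right h3.le hjz.le
    calc ‖a * φ (j z)‖ = a * |φ (j z)| := by
          rw [Real.norm_eq_abs, abs_mul, abs_of_pos ha]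
      _ ≤ a * (ε * j z) := mul_le_mul_of_nonneg_left h4 ha.le
      _ ≤ a * (ε * (C * ‖z‖)) := by
          apply mul_le_mul_of_nonneg_left _ ha.le
          exact mul_le_mul_of_nonneg_left (hbound z) hεpos.le
      _ = c * ‖z‖ := by rw [hε]; field_simp

lemma ratio_lt_one {φ : ℝ → ℝ}
    (hφanti : StrictAntiOn (fun t => deriv φ t / t) (Set.Ioi (0 : ℝ)))
    (hφlim : Filter.Tendsto (fun t => deriv φ t / t)
      (nhdsWithin 0 (Set.Ioi (0 : ℝ))) (nhds 1))
    {ρ : ℝ} (hρ : 0 < ρ) : deriv φ ρ < ρ := by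
  have h1 : deriv φ ρ / ρ < deriv φ (ρ/2) / (ρ/2) :=
    hφanti (Set.mem_Ioi.mpr (half_pos hρ)) (Set.mem_Ioi.mpr hρ) (by linarith)
  have h2 : deriv φ (ρ/2) / (ρ/2) ≤ 1 := by
    apply ge_of_tendsto hφlim
    filter_upwards [Ioo_mem_nhdsGT_of_mem (Set.mem_Ico.mpr ⟨le_refl 0, half_pos hρ⟩)] with u hu
    exact (hφanti (Set.mem_Ioi.mpr hu.1) (Set.mem_Ioi.mpr (half_pos hρ)) hu.2).le
  rw [div_lt_iff₀ hρ] at h1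
  calc deriv φ ρ < deriv φ (ρ/2) / (ρ/2) * ρ := h1
    _ ≤ 1 * ρ := mul_le_mul_of_nonneg_right h2 hρ.le
    _ = ρ := one_mul ρ



lemma Jmap_smul (n : ℕ) (c : ℝ) (x : EuclideanSpace ℝ (Fin (2 * n))) :
    Jmap n (c • x) = c • Jmap n x := by
  ext i
  simp only [Jmap, PiLp.smul_apply, PiLp.toLp_apply, smul_eq_mul]
  split <;> ring

lemma inner_Jmap_self (n : ℕ) (v : EuclideanSpace ℝ (Fin (2 * n))) :
    (inner ℝ v (Jmap n v) : ℝ) = 0 := by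
  classical
  set w : ℕ → ℝ := fun k => if h : k < 2 * n then v ⟨k, h⟩ else 0 with hw
  have hterm : ∀ i : Fin (2 * n), v i * Jmap n v i
      = w (i : ℕ) * (if (i : ℕ) < n then -w ((i : ℕ) + n) else w ((i : ℕ) - n)) := by
    intro i
    have hi := i.isLt
    have hv : w (i : ℕ) = v i := by rw [hw]; simp only [dif_pos hi, Fin.eta]
    by_cases h : (i : ℕ) < n
    · simp only [Jmap, PiLp.toLp_apply]
      rw [dif_pos h, if_pos h, hv, hw]
      simp only [dif_pos (show (i:ℕ) + n < 2*n by omega)]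
    · simp only [Jmap, PiLp.toLp_apply]
      rw [dif_neg h, if_neg h, hv, hw]
      simp only [dif_pos (show (i:ℕ) - n < 2*n by omega)]
  calc (inner ℝ v (Jmap n v) : ℝ) = ∑ i : Fin (2*n), v i * Jmap n v i := by
        simp [PiLp.inner_apply, RCLike.inner_apply, mul_comm]
    _ = ∑ i : Fin (2*n),
        (fun k : ℕ => w k * (if k < n then -w (k + n) else w (k - n))) (i : ℕ) := by
        exact Finset.sum_congr rfl fun i _ => hterm i
    _ = ∑ k ∈ Finset.range (2*n), w k * (if k < n then -w (k + n) else w (k - n)) := by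
        exact Fin.sum_univ_eq_sum_range
          (fun k => w k * (if k < n then -w (k + n) else w (k - n))) (2*n)
    _ = 0 := by
        rw [two_mul, Finset.sum_range_add, ← Finset.sum_add_distrib]
        apply Finset.sum_eq_zero
        intro k hk
        rw [Finset.mem_range] at hk
        rw [if_pos hk, if_neg (show ¬ n + k < n by omega),
          Nat.add_sub_cancel_left, add_comm n k]
        ring


/-- The nonconstant `T`-periodic solutions of `ẋ = J·∇H_a(x)`, `H_a = a·φ(j(·))`, are exactly
the reparametrized closed characteristics `x(t) = ρ·y(τ·t/T)` with `τ < a·T` and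
`a·φ'(ρ) = ρ·τ/T`. -/
theorem fixed_period_solutions_correspond_to_closed_characteristics
    (n : ℕ) (j : EuclideanSpace ℝ (Fin (2 * n)) → ℝ) (hj : IsGauge n j)
    (φ : ℝ → ℝ)
    (hφsmooth : ContDiff ℝ (⊤ : ℕ∞) φ)
    (hφnonneg : ∀ t : ℝ, 0 ≤ t → 0 ≤ φ t)
    (hφ0 : φ 0 = 0) (hφ'0 : deriv φ 0 = 0) (hφ''0 : deriv (deriv φ) 0 = 1)
    (hφ'pos : ∀ t : ℝ, 0 < t → 0 < deriv φ t)
    (hφanti : StrictAntiOn (fun t => deriv φ t / t) (Set.Ioi (0 : ℝ)))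
    (hφlim : Filter.Tendsto (fun t => deriv φ t / t) (nhdsWithin 0 (Set.Ioi (0 : ℝ))) (nhds 1))
    (a T : ℝ) (ha : 0 < a) (hT : 0 < T)
    (Ha : EuclideanSpace ℝ (Fin (2 * n)) → ℝ) (hHa : ∀ x, Ha x = a * φ (j x)) :
    -- (i) every closed characteristic of period `τ` yields a `T`-periodic solution
    (∀ (τ : ℝ) (y : ℝ → EuclideanSpace ℝ (Fin (2 * n))) (ρ : ℝ),
      IsClosedCharacteristic n j τ y → 0 < ρ → a * deriv φ ρ = ρ * τ / T →
      ((∀ t : ℝ, HasDerivAt (fun s => ρ • y (τ * s / T))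
          (Jmap n (gradient Ha (ρ • y (τ * t / T)))) t) ∧
       (∀ t : ℝ, ρ • y (τ * (t + T) / T) = ρ • y (τ * t / T))))
    ∧
    -- (ii) every nonconstant `T`-periodic solution arises this way
    (∀ x : ℝ → EuclideanSpace ℝ (Fin (2 * n)),
      (∀ t : ℝ, HasDerivAt x (Jmap n (gradient Ha (x t))) t) →
      (∀ t : ℝ, x (t + T) = x t) →
      (¬ ∃ c, ∀ t : ℝ, x t = c) →
      ∃ (τ : ℝ) (ρ : ℝ) (y : ℝ → EuclideanSpace ℝ (Fin (2 * n))),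
        0 < τ ∧ τ < a * T ∧ 0 < ρ ∧ a * deriv φ ρ = ρ * τ / T ∧
        IsClosedCharacteristic n j τ y ∧
        ∀ t : ℝ, x t = ρ • y (τ * t / T)) := by
  have hHaeq : Ha = fun z => a * φ (j z) := funext hHa
  subst hHaeq
  constructor
  · -- Part (i)
    rintro τ y ρ ⟨hτ, hy', hy1, hyper⟩ hρ hρτ
    have hydiff : ∀ s : ℝ, y s ≠ 0 := by
      intro s hs
      have := hy1 s
      rw [hs, hj.2.2.1] at this
      norm_num at this
    have hgrad : ∀ s : ℝ, gradient (fun z => a * φ (j z)) (ρ • y s)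
        = (ρ * τ / T) • gradient j (y s) := by
      intro s
      have h1 := gauge_hasGradientAt_comp hj hφsmooth a
        (x := ρ • y s) (smul_ne_zero (ne_of_gt hρ) (hydiff s))
      rw [h1.gradient, hj.1 ρ hρ, hy1 s, mul_one,
        gauge_gradient_smul hj hρ (hydiff s), hρτ]
    constructor
    · intro t
      have hst : HasDerivAt (fun s : ℝ => τ * s / T) (τ / T) t := by
        simpa using ((hasDerivAt_id t).const_mul τ).div_const T
      have h1 : HasDerivAt (fun s => y (τ * s / T))
          ((τ / T) • Jmap n (gradient j (y (τ * t / T)))) t := by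
        simpa [Function.comp_def] using (hy' (τ * t / T)).scomp t hst
      have h2 := h1.const_smul ρ
      have h3 : gradient (fun z => a * φ (j z)) (ρ • y (τ * t / T))
          = (ρ * τ / T) • gradient j (y (τ * t / T)) := hgrad (τ * t / T)
      rw [h3, Jmap_smul]
      refine h2.congr_deriv ?_
      rw [smul_smul]
      congr 1
      field_simp
    · intro t
      have : τ * (t + T) / T = τ * t / T + τ := by field_simp
      rw [this, hyper]
  · -- Part (ii)
    intro x hx' hper hnc
    rcases Nat.eq_zero_or_pos n with hn | hn
    · subst hn
      haveI : IsEmpty (Fin (2 * 0)) := inferInstanceAs (IsEmpty (Fin 0))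
      haveI : Subsingleton (EuclideanSpace ℝ (Fin (2 * 0))) :=
        ⟨fun u v => by ext i; exact isEmptyElim i⟩
      exact absurd ⟨x 0, fun t => Subsingleton.elim _ _⟩ hnc
    -- conservation of energy
    have hD : ∀ t : ℝ, HasDerivAt (fun s => a * φ (j (x s))) 0 t := by
      intro t
      rcases eq_or_ne (x t) 0 with hxt | hxt
      · have hg : HasGradientAt (fun z => a * φ (j z)) 0 (x t) := by
          rw [hxt]; exact gauge_hasGradientAt_zero hn hj hφsmooth hφ0 hφ'0 ha
        have hode := hx' t
        rw [hg.gradient] at hode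
        have h2 := (hasGradientAt_iff_hasFDerivAt.mp hg).comp_hasDerivAt t hode
        have h3 : ((InnerProductSpace.toDual ℝ (EuclideanSpace ℝ (Fin (2 * n)))) 0)
            (Jmap n 0) = (0 : ℝ) := by simp
        rw [h3] at h2
        exact h2
      · have hg := gauge_hasGradientAt_comp hj hφsmooth a hxt
        have hode := hx' t
        rw [hg.gradient] at hode
        have h2 := (hasGradientAt_iff_hasFDerivAt.mp hg).comp_hasDerivAt t hode
        have h3 : ((InnerProductSpace.toDual ℝ (EuclideanSpace ℝ (Fin (2 * n))))
              ((a * deriv φ (j (x t))) • gradient j (x t)))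
            (Jmap n ((a * deriv φ (j (x t))) • gradient j (x t))) = (0 : ℝ) := by
          rw [InnerProductSpace.toDual_apply_apply]
          exact inner_Jmap_self n _
        rw [h3] at h2
        exact h2
    have hcons : ∀ s t : ℝ, a * φ (j (x s)) = a * φ (j (x t)) := by
      intro s t
      exact is_const_of_deriv_eq_zero (fun u => (hD u).differentiableAt)
        (fun u => (hD u).deriv) s t
    obtain ⟨t0, ht0⟩ : ∃ t, x t ≠ 0 := by
      by_contra h
      push_neg at h
      exact hnc ⟨0, fun t => h t⟩
    have hmono : StrictMonoOn φ (Set.Ici 0) := by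
      apply strictMonoOn_of_deriv_pos (convex_Ici 0) hφsmooth.continuous.continuousOn
      rw [interior_Ici]
      exact fun t ht => hφ'pos t ht
    have hjnonneg : ∀ t : ℝ, 0 ≤ j (x t) := by
      intro t
      rcases eq_or_ne (x t) 0 with h | h
      · rw [h, hj.2.2.1]
      · exact (hj.2.1 _ h).le
    set ρ := j (x t0) with hρdef
    have hρpos : 0 < ρ := hj.2.1 _ ht0
    have hjconst : ∀ t : ℝ, j (x t) = ρ := by
      intro t
      have h1 := hcons t t0
      have h2 : φ (j (x t)) = φ ρ := mul_left_cancel₀ (ne_of_gt ha) h1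
      exact hmono.injOn (hjnonneg t) hρpos.le h2
    have hxne : ∀ t : ℝ, x t ≠ 0 := by
      intro t h
      have := hjconst t
      rw [h, hj.2.2.1] at this
      exact absurd this.symm (ne_of_gt hρpos)
    have hφ'ρ : 0 < deriv φ ρ := hφ'pos ρ hρpos
    set τ := a * deriv φ ρ * T / ρ with hτdef
    have hτpos : 0 < τ := by positivity
    have hratio : deriv φ ρ < ρ := ratio_lt_one hφanti hφlim hρpos
    have hτlt : τ < a * T := by
      rw [hτdef, div_lt_iff₀ hρpos]
      nlinarith [mul_lt_mul_of_pos_left hratio (mul_pos ha hT)]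
    have hρτ : a * deriv φ ρ = ρ * τ / T := by
      rw [hτdef]
      field_simp
    set y := fun s : ℝ => ρ⁻¹ • x (T * s / τ) with hydef
    have hgradx : ∀ t : ℝ, gradient (fun z => a * φ (j z)) (x t)
        = (a * deriv φ ρ) • gradient j (x t) := by
      intro t
      rw [(gauge_hasGradientAt_comp hj hφsmooth a (hxne t)).gradient, hjconst t]
    refine ⟨τ, ρ, y, hτpos, hτlt, hρpos, hρτ, ⟨hτpos, ?_, ?_, ?_⟩, ?_⟩
    · -- derivative of y
      intro s
      set t' := T * s / τ with ht'def
      have hst : HasDerivAt (fun s : ℝ => T * s / τ) (T / τ) s := by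
        simpa using ((hasDerivAt_id s).const_mul T).div_const τ
      have h1 : HasDerivAt (fun s : ℝ => x (T * s / τ))
          ((T / τ) • Jmap n (gradient (fun z => a * φ (j z)) (x t'))) s := by
        simpa [Function.comp_def] using (hx' t').scomp s hst
      have h2 := h1.const_smul ρ⁻¹
      have h3 : gradient j (y s) = gradient j (x t') := by
        rw [hydef]
        exact gauge_gradient_smul hj (inv_pos.mpr hρpos) (hxne t')
      rw [h3]
      refine h2.congr_deriv ?_
      rw [hgradx t', Jmap_smul, smul_smul, smul_smul]
      conv_rhs => rw [← one_smul ℝ (Jmap n (gradient j (x t')))]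
      congr 1
      rw [hρτ]
      field_simp
    · -- j (y s) = 1
      intro s
      rw [hydef]
      simp only
      rw [hj.1 _ (inv_pos.mpr hρpos), hjconst, inv_mul_cancel₀ (ne_of_gt hρpos)]
    · -- periodicity
      intro s
      have harg : T * (s + τ) / τ = T * s / τ + T := by field_simp
      rw [hydef]
      simp only
      rw [harg, hper]
    · -- x t = ρ • y (τ * t / T)
      intro t
      have harg : T * (τ * t / T) / τ = t := by field_simp
      rw [hydef]
      simp only
      rw [harg, smul_smul, mul_inv_cancel₀ (ne_of_gt hρpos), one_smul]
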